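/- For every η > 0 there exist ε > 0 and Q₀ such that for all real Q ≥ Q₀ and every positive integer n with n ≤ Q and rad(n) ≤ Q^ε, the number of divisors satisfies τ(n) ≤ exp(η·(log Q)/(log log Q)). -/

import Mathlib

open Finset

private lemma key_eps {η : ℝ} (hη : 0 < η) :
    min 1 (η^2/144) * (Real.log (min 1 (η^2/144))⁻¹ + 1) ≤ η / 4 := by
  rcases le_or_gt 1 (η^2/144) with h | h
  · rw [min_eq_left h]
    simp only [inv_one, Real.log_one]
    have h12 : 12 ≤ η := by nlinarith
    linarith
  · rw [min_eq_right h.le]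
    have h1 : (η^2/144)⁻¹ = (12/η)^2 := by
      field_simp; norm_num
    have h2 : Real.log ((η^2/144)⁻¹) ≤ 2*(12/η) - 2 := by
      rw [h1, sq, Real.log_mul (by positivity) (by positivity)]
      have := Real.log_le_sub_one_of_pos (show (0:ℝ) < 12/η by positivity)
      linarith
    have h3 : 0 < η^2/144 := by positivity
    have hA : η^2/144 * (Real.log ((η^2/144)⁻¹)) ≤ η/6 - η^2/72 := by
      have hmul := mul_le_mul_of_nonneg_left h2 h3.le
      have hq : η^2/144 * (2*(12/η) - 2) = η/6 - η^2/72 := by field_simp; ring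
      linarith
    nlinarith [hA, sq_nonneg η]

set_option maxHeartbeats 1000000 in
theorem stmt_7 :
    ∀ η : ℝ, 0 < η → ∃ ε : ℝ, 0 < ε ∧ ∃ Q₀ : ℝ, ∀ Q : ℝ, Q₀ ≤ Q →
      ∀ n : ℕ, 0 < n → (n : ℝ) ≤ Q →
        ((∏ p ∈ n.primeFactors, p : ℕ) : ℝ) ≤ Q ^ ε →
        (n.divisors.card : ℝ) ≤
          Real.exp (η * (Real.log Q / Real.log (Real.log Q))) := by
  intro η hη
  have hε0 : 0 < min 1 (η^2/144) := lt_min one_pos (by positivity)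
  refine ⟨min 1 (η^2/144), hε0,
    Real.exp (Real.exp (max 256 (4 * Real.log (4/η)))), ?_⟩
  set ε : ℝ := min 1 (η^2/144) with hεdef
  have hε1 : ε ≤ 1 := min_le_left _ _
  have hεinv1 : 1 ≤ ε⁻¹ := one_le_inv_iff₀.2 ⟨hε0, hε1⟩
  have hlogεinv : 0 ≤ Real.log ε⁻¹ := Real.log_nonneg hεinv1
  intro Q hQ n hn hnQ hrad
  set M : ℝ := max 256 (4 * Real.log (4/η)) with hMdef
  have hQ0 : 0 < Q := lt_of_lt_of_le (Real.exp_pos _) hQ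
  set L : ℝ := Real.log Q with hLdef
  have hL : Real.exp M ≤ L := (Real.le_log_iff_exp_le hQ0).2 hQ
  have hL0 : 0 < L := lt_of_lt_of_le (Real.exp_pos M) hL
  set LL : ℝ := Real.log L with hLLdef
  have hLLM : M ≤ LL := (Real.le_log_iff_exp_le hL0).2 hL
  have hLL256 : (256:ℝ) ≤ LL := le_trans (le_max_left _ _) hLLM
  have hLLη : 4 * Real.log (4/η) ≤ LL := le_trans (le_max_right _ _) hLLM
  have hLL0 : 0 < LL := lt_of_lt_of_le (by norm_num) hLL256
  have hL257 : (257:ℝ) ≤ L := by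
    have h1 : (256:ℝ) + 1 ≤ Real.exp 256 := Real.add_one_le_exp 256
    have h2 : Real.exp (256:ℝ) ≤ Real.exp M := Real.exp_le_exp.2 (le_max_left _ _)
    linarith
  set T : ℝ := η * L / (4 * LL^2) with hTdef
  have hT0 : 0 < T := by positivity
  -- log T ≥ LL / 2
  have hloglog : Real.log LL ≤ LL / 8 := by
    have h1 : Real.log LL = 2 * Real.log (Real.sqrt LL) := by
      rw [Real.log_sqrt hLL0.le]; ring
    have h2 : Real.log (Real.sqrt LL) ≤ Real.sqrt LL - 1 :=
      Real.log_le_sub_one_of_pos (Real.sqrt_pos.2 hLL0)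
    have h3 : (16:ℝ) ≤ Real.sqrt LL := by
      rw [show (16:ℝ) = Real.sqrt 256 by
        rw [show (256:ℝ) = 16^2 by norm_num, Real.sqrt_sq (by norm_num)]]
      exact Real.sqrt_le_sqrt hLL256
    have h4 : Real.sqrt LL * Real.sqrt LL = LL := Real.mul_self_sqrt hLL0.le
    nlinarith
  have hlogT : LL / 2 ≤ Real.log T := by
    have h1 : Real.log T = Real.log η + L.log - (Real.log 4 + 2 * Real.log LL) := by
      rw [hTdef, Real.log_div (by positivity) (by positivity),
        Real.log_mul hη.ne' hL0.ne', Real.log_mul (by norm_num) (by positivity),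
        Real.log_pow]
      push_cast; ring
    have h2 : Real.log (4/η) = Real.log 4 - Real.log η :=
      Real.log_div (by norm_num) hη.ne'
    rw [h1, ← hLLdef]
    rw [h2] at hLLη
    linarith
  have hlogT0 : 0 < Real.log T := lt_of_lt_of_le (by linarith) hlogT
  -- divisor count as a product
  classical
  have hcast : (n.divisors.card : ℝ)
      = ∏ p ∈ n.primeFactors, ((n.factorization p : ℝ) + 1) := by
    rw [Nat.card_divisors hn.ne']
    push_cast
    rfl
  set P := n.primeFactors with hPdef
  set a : ℕ → ℕ := fun p => n.factorization p with hadef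
  -- exponent bound : a p ≤ 1.5 L for p prime dividing n
  have hexp : ∀ p ∈ P, (a p : ℝ) ≤ 3/2 * L := by
    intro p hp
    have hprime : p.Prime := Nat.prime_of_mem_primeFactors hp
    have hdvd : p ^ a p ∣ n := Nat.ordProj_dvd n p
    have h1 : (2:ℕ) ^ a p ≤ n :=
      le_trans (Nat.pow_le_pow_left hprime.two_le _) (Nat.le_of_dvd hn hdvd)
    have h2 : ((2:ℝ)) ^ a p ≤ Q := by
      calc ((2:ℝ)) ^ a p = (((2:ℕ) ^ a p : ℕ) : ℝ) := by push_cast; ring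
      _ ≤ (n:ℝ) := Nat.cast_le.2 h1
      _ ≤ Q := hnQ
    have h3 : (a p : ℝ) * Real.log 2 ≤ L := by
      rw [← Real.log_pow]
      exact Real.log_le_log (by positivity) h2
    have h4 : (0.6931471803:ℝ) < Real.log 2 := Real.log_two_gt_d9
    nlinarith [Nat.cast_nonneg (α := ℝ) (a p)]
  set Sm : Finset ℕ := P.filter (fun p => (p:ℝ) ≤ T) with hSmdef
  set Lg : Finset ℕ := P.filter (fun p => ¬ (p:ℝ) ≤ T) with hLgdef
  have hsplit : ∏ p ∈ P, ((a p : ℝ) + 1)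
      = (∏ p ∈ Sm, ((a p : ℝ) + 1)) * ∏ p ∈ Lg, ((a p : ℝ) + 1) :=
    (Finset.prod_filter_mul_prod_filter_not P _ _).symm
  -- small primes
  have hSmcard : (Sm.card : ℝ) ≤ T := by
    have hsub : Sm ⊆ Finset.Icc 1 ⌊T⌋₊ := by
      intro p hp
      rw [hSmdef, Finset.mem_filter] at hp
      exact Finset.mem_Icc.2 ⟨(Nat.prime_of_mem_primeFactors hp.1).one_lt.le,
        Nat.le_floor hp.2⟩
    calc (Sm.card : ℝ) ≤ ((Finset.Icc 1 ⌊T⌋₊).card : ℝ) :=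
          Nat.cast_le.2 (Finset.card_le_card hsub)
    _ ≤ (⌊T⌋₊ : ℝ) := by rw [Nat.card_Icc]; simp
    _ ≤ T := Nat.floor_le hT0.le
  have hsmall : ∏ p ∈ Sm, ((a p : ℝ) + 1) ≤ Real.exp (T * (2 * LL)) := by
    have h2L : 0 < 2 * L := by linarith
    have hfac : ∀ p ∈ Sm, (a p : ℝ) + 1 ≤ Real.exp (Real.log (2 * L)) := by
      intro p hp
      rw [Real.exp_log h2L]
      have := hexp p (Finset.filter_subset _ _ hp)
      linarith
    calc ∏ p ∈ Sm, ((a p : ℝ) + 1)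
        ≤ ∏ _p ∈ Sm, Real.exp (Real.log (2 * L)) :=
          Finset.prod_le_prod (fun p _ => by positivity) hfac
    _ = Real.exp ((Sm.card : ℝ) * Real.log (2 * L)) := by
          rw [Finset.prod_const, ← Real.exp_nat_mul]
    _ ≤ Real.exp (T * (2 * LL)) := by
          apply Real.exp_le_exp.2
          have hlog2L : Real.log (2 * L) ≤ 2 * LL := by
            rw [Real.log_mul (by norm_num) hL0.ne']
            have : Real.log 2 ≤ 1 := by
              have := Real.log_le_sub_one_of_pos (show (0:ℝ) < 2 by norm_num)
              linarith
            rw [← hLLdef]; linarith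
          have h1 : 0 ≤ Real.log (2 * L) := Real.log_nonneg (by linarith)
          calc (Sm.card : ℝ) * Real.log (2 * L) ≤ T * Real.log (2 * L) :=
                mul_le_mul_of_nonneg_right hSmcard h1
          _ ≤ T * (2 * LL) := mul_le_mul_of_nonneg_left hlog2L hT0.le
  -- large primes
  set k : ℕ := Lg.card with hkdef
  set S : ℕ := ∑ p ∈ Lg, a p with hSdef
  have hTlt : ∀ p ∈ Lg, T ≤ (p:ℝ) := by
    intro p hp
    rw [hLgdef, Finset.mem_filter] at hp
    exact (not_le.1 hp.2).le
  have hkT : (k : ℝ) * Real.log T ≤ ε * L := by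
    have h1 : T ^ k ≤ ∏ p ∈ Lg, (p:ℝ) := by
      rw [← Finset.prod_const]
      exact Finset.prod_le_prod (fun p _ => hT0.le) hTlt
    have h2n : (∏ p ∈ Lg, p) ≤ ∏ p ∈ P, p :=
      Finset.prod_le_prod_of_subset_of_one_le' (Finset.filter_subset _ _)
        (fun p hp _ => (Nat.prime_of_mem_primeFactors hp).one_lt.le)
    have h3 : T ^ k ≤ Q ^ ε := by
      calc T ^ k ≤ ∏ p ∈ Lg, (p:ℝ) := h1
      _ = ((∏ p ∈ Lg, p : ℕ) : ℝ) := by push_cast; rfl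
      _ ≤ ((∏ p ∈ P, p : ℕ) : ℝ) := Nat.cast_le.2 h2n
      _ ≤ Q ^ ε := hrad
    have h4 := Real.log_le_log (by positivity) h3
    rwa [Real.log_pow, Real.log_rpow hQ0] at h4
  have hST : (S : ℝ) * Real.log T ≤ L := by
    have h1 : T ^ S ≤ ∏ p ∈ Lg, (p:ℝ) ^ a p := by
      rw [← Finset.prod_pow_eq_pow_sum]
      exact Finset.prod_le_prod (fun p _ => by positivity)
        (fun p hp => pow_le_pow_left₀ hT0.le (hTlt p hp) _)
    have hfull : ∏ p ∈ P, p ^ a p = n := by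
      have := Nat.factorization_prod_pow_eq_self hn.ne'
      rwa [Finsupp.prod, Nat.support_factorization] at this
    have h2 : (∏ p ∈ Lg, (p:ℝ) ^ a p) ≤ (n : ℝ) := by
      have hd : (∏ p ∈ Lg, p ^ a p) ∣ n := by
        rw [← hfull]
        exact Finset.prod_dvd_prod_of_subset _ _ _ (Finset.filter_subset _ _)
      have := Nat.le_of_dvd hn hd
      calc (∏ p ∈ Lg, (p:ℝ) ^ a p) = ((∏ p ∈ Lg, p ^ a p : ℕ) : ℝ) := by push_cast; ring
      _ ≤ (n:ℝ) := Nat.cast_le.2 this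
    have h3 : T ^ S ≤ Q := le_trans h1 (le_trans h2 hnQ)
    have h4 := Real.log_le_log (by positivity) h3
    rwa [Real.log_pow] at h4
  have hk2 : (k : ℝ) ≤ 2 * ε * L / LL := by
    have h1 : (k:ℝ) * (LL/2) ≤ ε * L :=
      le_trans (mul_le_mul_of_nonneg_left hlogT (Nat.cast_nonneg k)) hkT
    rw [le_div_iff₀ hLL0]
    linarith
  have hS2 : (S : ℝ) ≤ 2 * L / LL := by
    have h1 : (S:ℝ) * (LL/2) ≤ L :=
      le_trans (mul_le_mul_of_nonneg_left hlogT (Nat.cast_nonneg S)) hST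
    rw [le_div_iff₀ hLL0]
    linarith
  have hlarge : ∏ p ∈ Lg, ((a p : ℝ) + 1)
      ≤ Real.exp ((k:ℝ) * Real.log ε⁻¹ + ε * S) := by
    have hfac : ∀ p ∈ Lg, (a p : ℝ) + 1 ≤ ε⁻¹ * Real.exp (ε * a p) := by
      intro p _
      have h1 : ε * (a p : ℝ) + 1 ≤ Real.exp (ε * a p) := Real.add_one_le_exp _
      have h2 : ε⁻¹ * (ε * (a p:ℝ) + 1) ≤ ε⁻¹ * Real.exp (ε * a p) :=
        mul_le_mul_of_nonneg_left h1 (by positivity)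
      have h3 : ε⁻¹ * (ε * (a p:ℝ) + 1) = (a p : ℝ) + ε⁻¹ := by
        rw [mul_add, ← mul_assoc, inv_mul_cancel₀ hε0.ne', one_mul, mul_one]
      linarith
    calc ∏ p ∈ Lg, ((a p : ℝ) + 1)
        ≤ ∏ p ∈ Lg, (ε⁻¹ * Real.exp (ε * a p)) :=
          Finset.prod_le_prod (fun p _ => by positivity) hfac
    _ = ε⁻¹ ^ k * Real.exp (ε * S) := by
          rw [Finset.prod_mul_distrib, Finset.prod_const, ← Real.exp_sum]
          congr 2
          rw [hSdef, ← Finset.mul_sum]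
          push_cast
          ring
    _ = Real.exp ((k:ℝ) * Real.log ε⁻¹ + ε * S) := by
          rw [Real.exp_add, Real.exp_nat_mul, Real.exp_log (by positivity)]
  -- combine
  rw [hcast, hsplit]
  have hmul : (∏ p ∈ Sm, ((a p : ℝ) + 1)) * ∏ p ∈ Lg, ((a p : ℝ) + 1)
      ≤ Real.exp (T * (2 * LL)) * Real.exp ((k:ℝ) * Real.log ε⁻¹ + ε * S) :=
    mul_le_mul hsmall hlarge (Finset.prod_nonneg (fun p _ => by positivity))
      (Real.exp_nonneg _)
  refine le_trans hmul ?_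
  rw [← Real.exp_add, Real.exp_le_exp]
  have e1 : T * (2 * LL) = η / 2 * (L / LL) := by
    rw [hTdef]; field_simp; ring
  have e2 : (k:ℝ) * Real.log ε⁻¹ + ε * S
      ≤ 2 * (ε * (Real.log ε⁻¹ + 1)) * (L / LL) := by
    have h1 : (k:ℝ) * Real.log ε⁻¹ ≤ (2 * ε * L / LL) * Real.log ε⁻¹ :=
      mul_le_mul_of_nonneg_right hk2 hlogεinv
    have h2 : ε * (S:ℝ) ≤ ε * (2 * L / LL) :=
      mul_le_mul_of_nonneg_left hS2 hε0.le
    have h3 : (2 * ε * L / LL) * Real.log ε⁻¹ + ε * (2 * L / LL)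
        = 2 * (ε * (Real.log ε⁻¹ + 1)) * (L / LL) := by
      field_simp
    linarith
  have hkey := key_eps hη
  rw [← hεdef] at hkey
  have hLLL : 0 ≤ L / LL := by positivity
  have e3 : 2 * (ε * (Real.log ε⁻¹ + 1)) * (L / LL) ≤ 2 * (η/4) * (L / LL) := by
    apply mul_le_mul_of_nonneg_right _ hLLL
    linarith
  rw [e1]
  have : η / 2 * (L / LL) + (2 * (η/4) * (L/LL)) = η * (L / LL) := by ring
  linarith
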